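/- Let V be a finite set, f : 2^V → ℝ a normalized (f(∅) = 0) monotone non-decreasing submodular set function, k a positive integer, and X* an optimal set of size k maximizing f among sets of size at most k. Let X_k be the set produced after k steps of the greedy algorithm starting from the empty set. Then f(X_k) ≥ (1 − (1 − 1/k)^k) · f(X*) ≥ (1 − 1/e) · f(X*). -/

import Mathlib

/-- Submodular marginal-gain bound: the gain of adding a whole set is at most
the sum of individual marginal gains. -/
theorem submod_sum_marginal {V : Type*} [DecidableEq V] (f : Finset V → ℝ)
    (hsub : ∀ A B : Finset V, f A + f B ≥ f (A ∪ B) + f (A ∩ B))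
    (hmono : ∀ X Y : Finset V, X ⊆ Y → f X ≤ f Y)
    (A S : Finset V) :
    f (A ∪ S) ≤ f A + ∑ u ∈ S, (f (insert u A) - f A) := by
  induction S using Finset.induction with
  | empty => simp
  | insert a S ha ih =>
    rw [Finset.sum_insert ha]
    have h1 : A ∪ insert a S = insert a (A ∪ S) := by ext x; simp
    have h2 := hsub (insert a A) (A ∪ S)
    have h3 : insert a A ∪ (A ∪ S) = insert a (A ∪ S) := by ext x; simp
    have h4 : A ⊆ insert a A ∩ (A ∪ S) := by
      intro x hx; simp [hx]
    have h5 := hmono _ _ h4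
    rw [h3] at h2
    rw [h1]
    linarith

/-- For a normalized monotone non-decreasing submodular `f`, an
optimal set `X*` of size `k` maximizing `f` among sets of size at most `k`, and
`X_k` the set produced after `k` greedy steps from `∅`,
`f(X_k) ≥ (1 − (1 − 1/k)^k) · f(X*) ≥ (1 − 1/e) · f(X*)`. -/
theorem greedy_one_minus_inv_e
    {V : Type*} [Fintype V] [DecidableEq V] (f : Finset V → ℝ)
    (hsub : ∀ A B : Finset V, f A + f B ≥ f (A ∪ B) + f (A ∩ B))
    (hmono : ∀ X Y : Finset V, X ⊆ Y → f X ≤ f Y)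
    (hnorm : f ∅ = 0)
    (k : ℕ) (hk : 0 < k)
    (Xstar : Finset V) (hcard : Xstar.card = k)
    (hopt : ∀ Y : Finset V, Y.card ≤ k → f Y ≤ f Xstar)
    (X : ℕ → Finset V) (v : ℕ → V)
    (hX0 : X 0 = ∅)
    (hstep : ∀ j < k, v (j + 1) ∉ X j ∧ X (j + 1) = insert (v (j + 1)) (X j) ∧
      ∀ u : V, u ∉ X j → f (insert u (X j)) ≤ f (insert (v (j + 1)) (X j))) :
    f (X k) ≥ (1 - (1 - 1 / (k : ℝ)) ^ k) * f Xstar ∧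
    (1 - (1 - 1 / (k : ℝ)) ^ k) * f Xstar ≥ (1 - 1 / Real.exp 1) * f Xstar := by
  have hkR : (0:ℝ) < (k:ℝ) := by exact_mod_cast hk
  set c : ℝ := 1 - 1/(k:ℝ) with hc
  clear_value c
  have hc0 : 0 ≤ c := by
    have : 1/(k:ℝ) ≤ 1 := by
      rw [div_le_one hkR]; exact_mod_cast hk
    linarith
  have hF0 : 0 ≤ f Xstar := by
    rw [← hnorm]; exact hmono _ _ (Finset.empty_subset _)
  have key : ∀ j ≤ k, f Xstar - f (X j) ≤ c ^ j * f Xstar := by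
    intro j
    induction j with
    | zero => intro _; simp [hX0, hnorm]
    | succ j ih =>
      intro hj
      have hjk : j < k := hj
      obtain ⟨hv, hXs, hgr⟩ := hstep j hjk
      have ihj := ih (le_of_lt hjk)
      have hsum := submod_sum_marginal f hsub hmono (X j) Xstar
      have hsubset : X j ⊆ X (j+1) := by rw [hXs]; exact Finset.subset_insert _ _
      have hδ0 : 0 ≤ f (X (j+1)) - f (X j) := by
        have := hmono _ _ hsubset; linarith
      have hterm : ∀ u ∈ Xstar,
          f (insert u (X j)) - f (X j) ≤ f (X (j+1)) - f (X j) := by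
        intro u _
        by_cases hu : u ∈ X j
        · rw [Finset.insert_eq_self.2 hu]; linarith
        · have := hgr u hu; rw [hXs]; linarith
      have hsumle : ∑ u ∈ Xstar, (f (insert u (X j)) - f (X j))
          ≤ (k:ℝ) * (f (X (j+1)) - f (X j)) := by
        calc ∑ u ∈ Xstar, (f (insert u (X j)) - f (X j))
            ≤ ∑ _u ∈ Xstar, (f (X (j+1)) - f (X j)) := Finset.sum_le_sum hterm
          _ = (k:ℝ) * (f (X (j+1)) - f (X j)) := by
              rw [Finset.sum_const, hcard]; simp [nsmul_eq_mul]
      have hopt' : f Xstar ≤ f (X j ∪ Xstar) := hmono _ _ Finset.subset_union_right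
      have hmain : f Xstar - f (X j) ≤ (k:ℝ) * (f (X (j+1)) - f (X j)) := by
        linarith
      have hstep' : f Xstar - f (X (j+1)) ≤ c * (f Xstar - f (X j)) := by
        have hexp : c * (f Xstar - f (X j))
            = (f Xstar - f (X j)) - (1/(k:ℝ)) * (f Xstar - f (X j)) := by rw [hc]; ring
        have hdiv : (1/(k:ℝ)) * (f Xstar - f (X j)) ≤ f (X (j+1)) - f (X j) := by
          rw [div_mul_eq_mul_div, one_mul, div_le_iff₀ hkR]
          linarith [hmain]
        linarith
      calc f Xstar - f (X (j+1)) ≤ c * (f Xstar - f (X j)) := hstep'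
        _ ≤ c * (c ^ j * f Xstar) := mul_le_mul_of_nonneg_left ihj hc0
        _ = c ^ (j+1) * f Xstar := by ring
  have h1 := key k le_rfl
  have hexpand : (1 - c ^ k) * f Xstar = f Xstar - c ^ k * f Xstar := by ring
  constructor
  · rw [hexpand]; linarith
  · have hle : c ≤ Real.exp (-(1/(k:ℝ))) := by
      have := Real.add_one_le_exp (-(1/(k:ℝ)))
      rw [hc]; linarith
    have hpow : c ^ k ≤ Real.exp (-(1/(k:ℝ))) ^ k := pow_le_pow_left₀ hc0 hle k
    have hek : Real.exp (-(1/(k:ℝ))) ^ k = Real.exp (-1) := by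
      rw [← Real.exp_nat_mul]
      congr 1
      field_simp
    have hck : c ^ k ≤ 1 / Real.exp 1 := by
      rw [hek] at hpow
      rwa [Real.exp_neg, ← one_div] at hpow
    have : 1 - 1 / Real.exp 1 ≤ 1 - c ^ k := by linarith
    exact mul_le_mul_of_nonneg_right this hF0
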